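/- For every real x > 0 and every real η with 0 < η < 1, one has Γ(x + η)/Γ(x) < x^η. -/

import Mathlib

open Real


lemma gamma_aux (x a : ℝ) (hx : 0 < x) (ha0 : 0 < a) (ha1 : a < 1) :
    Real.Gamma (x + a) ≤ Real.Gamma x * x ^ a := by
  have h := Real.Gamma_mul_add_mul_le_rpow_Gamma_mul_rpow_Gamma hx
    (by linarith : (0:ℝ) < x + 1) (by linarith : (0:ℝ) < 1 - a) ha0 (by ring)
  have hc : (1 - a) * x + a * (x + 1) = x + a := by ring
  rw [hc, Real.Gamma_add_one hx.ne'] at h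
  have hG : 0 < Real.Gamma x := Real.Gamma_pos_of_pos hx
  calc Real.Gamma (x + a) ≤ Real.Gamma x ^ (1 - a) * (x * Real.Gamma x) ^ a := h
    _ = Real.Gamma x * x ^ a := by
        rw [Real.mul_rpow hx.le hG.le, ← mul_assoc,
          mul_comm (Real.Gamma x ^ (1 - a)) (x ^ a), mul_assoc,
          ← Real.rpow_add hG, sub_add_cancel, Real.rpow_one, mul_comm]

/-- Lemma 2.3, inequality (2.7): for `0 < η < 1`, `Γ(x + η) / Γ(x) < x ^ η`. -/
theorem gamma_ratio_lt_rpow (x η : ℝ) (hx : 0 < x) (hη0 : 0 < η) (hη1 : η < 1) :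
    Real.Gamma (x + η) / Real.Gamma x < x ^ η := by
  have hG : 0 < Real.Gamma x := Real.Gamma_pos_of_pos hx
  rw [div_lt_iff₀ hG]
  have h1 : Real.Gamma (x + η) ≤ Real.Gamma x * x ^ η := gamma_aux x η hx hη0 hη1
  by_contra hcon
  push_neg at hcon
  have heq : Real.Gamma (x + η) = Real.Gamma x * x ^ η := le_antisymm h1 (by linarith [hcon])
  have h2 : Real.Gamma (x + η / 2) ≤ Real.Gamma x * x ^ (η / 2) :=
    gamma_aux x (η / 2) hx (by linarith) (by linarith)
  set a : ℝ := (1 - η) / (1 - η / 2) with ha_def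
  set b : ℝ := (η / 2) / (1 - η / 2) with hb_def
  have hd : (0:ℝ) < 1 - η / 2 := by linarith
  have h2η : (2:ℝ) - η ≠ 0 := by linarith
  have ha : 0 < a := div_pos (by linarith) hd
  have hb : 0 < b := div_pos (by linarith) hd
  have hab : a + b = 1 := by rw [ha_def, hb_def]; field_simp; ring
  have h3 := Real.Gamma_mul_add_mul_le_rpow_Gamma_mul_rpow_Gamma
    (by linarith : (0:ℝ) < x + η / 2) (by linarith : (0:ℝ) < x + 1) ha hb hab
  have hc3 : a * (x + η / 2) + b * (x + 1) = x + η := by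
    rw [ha_def, hb_def, div_mul_eq_mul_div, div_mul_eq_mul_div, ← add_div,
      div_eq_iff hd.ne']
    ring
  rw [hc3, Real.Gamma_add_one hx.ne'] at h3
  have hGa : 0 < Real.Gamma (x + η / 2) := Real.Gamma_pos_of_pos (by linarith)
  have hx2 : (0:ℝ) < x ^ (η / 2) := Real.rpow_pos_of_pos hx _
  have hRHS : (Real.Gamma x * x ^ (η / 2)) ^ a * (x * Real.Gamma x) ^ b
      = Real.Gamma x * x ^ η := by
    rw [Real.mul_rpow hG.le hx2.le, Real.mul_rpow hx.le hG.le,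
      ← Real.rpow_mul hx.le]
    calc Real.Gamma x ^ a * x ^ (η / 2 * a) * (x ^ b * Real.Gamma x ^ b)
        = (Real.Gamma x ^ a * Real.Gamma x ^ b) * (x ^ (η / 2 * a) * x ^ b) := by ring
      _ = Real.Gamma x * x ^ η := by
          rw [← Real.rpow_add hG, ← Real.rpow_add hx, hab]
          rw [Real.rpow_one]
          congr 1
          rw [ha_def, hb_def, mul_div_assoc', ← add_div]
          congr 1
          rw [div_eq_iff hd.ne']
          ring
  -- equality in h2
  have heq2 : Real.Gamma (x + η / 2) = Real.Gamma x * x ^ (η / 2) := by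
    by_contra hne
    have hlt : Real.Gamma (x + η / 2) < Real.Gamma x * x ^ (η / 2) := lt_of_le_of_ne h2 hne
    have hstep : Real.Gamma (x + η / 2) ^ a < (Real.Gamma x * x ^ (η / 2)) ^ a :=
      Real.rpow_lt_rpow hGa.le hlt ha
    have hbpos : (0:ℝ) < (x * Real.Gamma x) ^ b := Real.rpow_pos_of_pos (by positivity) _
    have : Real.Gamma (x + η / 2) ^ a * (x * Real.Gamma x) ^ b
        < (Real.Gamma x * x ^ (η / 2)) ^ a * (x * Real.Gamma x) ^ b :=
      mul_lt_mul_of_pos_right hstep hbpos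
    rw [hRHS] at this
    linarith [heq ▸ h3]
  -- step 4: midpoint convexity at x+1, x+1+η, contradiction with AM-GM
  have h4 := Real.Gamma_mul_add_mul_le_rpow_Gamma_mul_rpow_Gamma
    (by linarith : (0:ℝ) < x + 1) (by linarith : (0:ℝ) < x + 1 + η)
    (by norm_num : (0:ℝ) < 1/2) (by norm_num : (0:ℝ) < 1/2) (by norm_num)
  have hc4 : (1/2:ℝ) * (x + 1) + (1/2:ℝ) * (x + 1 + η) = (x + η / 2) + 1 := by ring
  rw [hc4, Real.Gamma_add_one (by positivity : x + η / 2 ≠ 0),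
    show x + 1 + η = (x + η) + 1 by ring, Real.Gamma_add_one (by positivity : x + η ≠ 0),
    Real.Gamma_add_one hx.ne', heq, heq2] at h4
  -- h4 : (x+η/2) * (Γx * x^(η/2)) ≤ (x*Γx)^(1/2) * ((x+η)*(Γx*x^η))^(1/2)
  have hPpos : (0:ℝ) < x * Real.Gamma x := by positivity
  have hQpos : (0:ℝ) < (x + η) * (Real.Gamma x * x ^ η) := by positivity
  have hL0 : (0:ℝ) ≤ (x + η / 2) * (Real.Gamma x * x ^ (η / 2)) := by positivity
  have hsq := mul_le_mul h4 h4 hL0 (le_trans hL0 h4)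
  have hP : (x * Real.Gamma x) ^ (1/2:ℝ) * (x * Real.Gamma x) ^ (1/2:ℝ) = x * Real.Gamma x := by
    rw [← Real.rpow_add hPpos]; norm_num
  have hQ : ((x + η) * (Real.Gamma x * x ^ η)) ^ (1/2:ℝ) *
      ((x + η) * (Real.Gamma x * x ^ η)) ^ (1/2:ℝ) = (x + η) * (Real.Gamma x * x ^ η) := by
    rw [← Real.rpow_add hQpos]; norm_num
  have hE : x ^ (η/2) * x ^ (η/2) = x ^ η := by
    rw [← Real.rpow_add hx, show η/2 + η/2 = η by ring]
  have hkey : (x + η/2) * (x + η/2) * (Real.Gamma x * Real.Gamma x * x ^ η)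
      ≤ x * (x + η) * (Real.Gamma x * Real.Gamma x * x ^ η) := by
    calc (x + η/2) * (x + η/2) * (Real.Gamma x * Real.Gamma x * x ^ η)
        = ((x + η / 2) * (Real.Gamma x * x ^ (η / 2))) *
          ((x + η / 2) * (Real.Gamma x * x ^ (η / 2))) := by rw [← hE]; ring
      _ ≤ ((x * Real.Gamma x) ^ (1/2:ℝ) * ((x + η) * (Real.Gamma x * x ^ η)) ^ (1/2:ℝ)) *
          ((x * Real.Gamma x) ^ (1/2:ℝ) * ((x + η) * (Real.Gamma x * x ^ η)) ^ (1/2:ℝ)) := hsq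
      _ = (x * Real.Gamma x) * ((x + η) * (Real.Gamma x * x ^ η)) := by
          rw [show ((x * Real.Gamma x) ^ (1/2:ℝ) * ((x + η) * (Real.Gamma x * x ^ η)) ^ (1/2:ℝ)) *
            ((x * Real.Gamma x) ^ (1/2:ℝ) * ((x + η) * (Real.Gamma x * x ^ η)) ^ (1/2:ℝ))
            = ((x * Real.Gamma x) ^ (1/2:ℝ) * (x * Real.Gamma x) ^ (1/2:ℝ)) *
              (((x + η) * (Real.Gamma x * x ^ η)) ^ (1/2:ℝ) *
               ((x + η) * (Real.Gamma x * x ^ η)) ^ (1/2:ℝ)) from by ring, hP, hQ]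
      _ = x * (x + η) * (Real.Gamma x * Real.Gamma x * x ^ η) := by ring
  have hC : (0:ℝ) < Real.Gamma x * Real.Gamma x * x ^ η := by positivity
  have := le_of_mul_le_mul_right hkey hC
  nlinarith
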